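/- Let 𝒢 be a set of congestion games with incentives, each with at most n users and MinCost(G) > 0, and suppose there exist ζ > 0, λ > 0 and μ < 1 such that for every game G ∈ 𝒢 and every pair of assignments a, a' ∈ A: SC(a) + Σ_{i=1}^n [C_i(a'_i, a_{−i}) − C_i(a)] + ζ[Φ(a') − Φ(a)] ≤ λ SC(a') + μ SC(a). Then for every G ∈ 𝒢, every assignment a^pm minimizing the Rosenthal potential Φ is a pure Nash equilibrium and satisfies SC(a^pm) ≤ (λ/(1−μ))·MinCost(G); consequently the price of stochastic anarchy PoSA = sup_{G∈𝒢} SC(a^pm)/MinCost(G) is at most λ/(1−μ). -/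
import Mathlib


open scoped BigOperators ENNReal

noncomputable section

/-- A congestion game with incentives: `n` users, `R` resources,
finite nonempty action sets `act i ⊆ 2^E`, resource cost functions `cost e`
and incentive functions `tax e`. -/
structure CGame where
  n : ℕ
  R : ℕ
  act : Fin n → Finset (Finset (Fin R))
  act_ne : ∀ i, (act i).Nonempty
  cost : Fin R → ℕ → ℝ
  tax : Fin R → ℕ → ℝ

namespace CGame

variable (G : CGame)

/-- An assignment of actions (not necessarily feasible). -/
abbrev Assign := Fin G.n → Finset (Fin G.R)

/-- Feasibility of an assignment. -/
def IsAssign (a : G.Assign) : Prop := ∀ i, a i ∈ G.act i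

/-- The load `|a|_e`: the number of users selecting resource `e`. -/
def load (a : G.Assign) (e : Fin G.R) : ℕ :=
  (Finset.univ.filter fun i => e ∈ a i).card

/-- The social cost `SC(a)`. -/
def SC (a : G.Assign) : ℝ := ∑ i, ∑ e ∈ a i, G.cost e (G.load a e)

/-- The cost `C_i(a)` experienced by user `i` (resource costs plus incentives). -/
def userCost (i : Fin G.n) (a : G.Assign) : ℝ :=
  ∑ e ∈ a i, (G.cost e (G.load a e) + G.tax e (G.load a e))

/-- Pure Nash equilibrium. -/
def IsNE (a : G.Assign) : Prop :=
  G.IsAssign a ∧ ∀ i : Fin G.n, ∀ s ∈ G.act i,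
    G.userCost i a ≤ G.userCost i (Function.update a i s)

/-- The Rosenthal potential of the game with incentives. -/
def potential (a : G.Assign) : ℝ :=
  ∑ e, ∑ k ∈ Finset.Icc 1 (G.load a e), (G.cost e k + G.tax e k)

/-- The minimum achievable social cost. -/
def MinCost : ℝ := sInf {c | ∃ a, G.IsAssign a ∧ G.SC a = c}

end CGame

namespace CGame

variable (G : CGame)

lemma load_eq_sum (a : G.Assign) (e : Fin G.R) :
    G.load a e = ∑ j, if e ∈ a j then 1 else 0 := by
  rw [load, Finset.card_filter]

/-- Rosenthal's key property: the change in potential under a unilateral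
deviation equals the change in that user's cost. -/
lemma potential_update_sub (a : G.Assign) (i : Fin G.n) (s : Finset (Fin G.R)) :
    G.potential (Function.update a i s) - G.potential a
      = G.userCost i (Function.update a i s) - G.userCost i a := by
  classical
  set a' := Function.update a i s with ha'
  have hm : ∀ e : Fin G.R, ∃ m : ℕ,
      G.load a e = m + (if e ∈ a i then 1 else 0) ∧
      G.load a' e = m + (if e ∈ s then 1 else 0) := by
    intro e
    refine ⟨∑ j ∈ Finset.univ.erase i, (if e ∈ a j then 1 else 0), ?_, ?_⟩
    · rw [load_eq_sum, ← Finset.sum_erase_add _ _ (Finset.mem_univ i)]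
    · rw [load_eq_sum, ← Finset.sum_erase_add _ _ (Finset.mem_univ i)]
      congr 1
      · refine Finset.sum_congr rfl fun j hj => ?_
        rw [ha', Function.update_of_ne (Finset.ne_of_mem_erase hj)]
      · rw [ha', Function.update_self]
  have key : ∀ e : Fin G.R,
      (∑ k ∈ Finset.Icc 1 (G.load a' e), (G.cost e k + G.tax e k))
        - (∑ k ∈ Finset.Icc 1 (G.load a e), (G.cost e k + G.tax e k))
      = (if e ∈ s then (G.cost e (G.load a' e) + G.tax e (G.load a' e)) else 0)
        - (if e ∈ a i then (G.cost e (G.load a e) + G.tax e (G.load a e)) else 0) := by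
    intro e
    obtain ⟨m, h1, h2⟩ := hm e
    by_cases hs : e ∈ s <;> by_cases hai : e ∈ a i
    · rw [if_pos hs] at h2; rw [if_pos hai] at h1
      rw [if_pos hs, if_pos hai, h1, h2]
      ring
    · rw [if_pos hs] at h2; rw [if_neg hai, Nat.add_zero] at h1
      rw [if_pos hs, if_neg hai, h1, h2,
        Finset.sum_Icc_succ_top (Nat.le_add_left 1 m)]
      ring
    · rw [if_neg hs, Nat.add_zero] at h2; rw [if_pos hai] at h1
      rw [if_neg hs, if_pos hai, h1, h2,
        Finset.sum_Icc_succ_top (Nat.le_add_left 1 m)]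
      ring
    · rw [if_neg hs, Nat.add_zero] at h2; rw [if_neg hai, Nat.add_zero] at h1
      rw [if_neg hs, if_neg hai, h1, h2]
      ring
  have hsum : G.potential a' - G.potential a
      = (∑ e, (if e ∈ s then (G.cost e (G.load a' e) + G.tax e (G.load a' e)) else 0))
        - (∑ e, (if e ∈ a i then (G.cost e (G.load a e) + G.tax e (G.load a e)) else 0)) := by
    rw [potential, potential, ← Finset.sum_sub_distrib, ← Finset.sum_sub_distrib]
    exact Finset.sum_congr rfl fun e _ => key e
  rw [hsum]
  congr 1
  · rw [userCost, Finset.sum_ite_mem, Finset.univ_inter]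
    refine Finset.sum_congr ?_ fun e _ => rfl
    rw [ha', Function.update_self]
  · rw [userCost, Finset.sum_ite_mem, Finset.univ_inter]

/-- Feasible deviations stay feasible. -/
lemma isAssign_update {a : G.Assign} (ha : G.IsAssign a) {i : Fin G.n}
    {s : Finset (Fin G.R)} (hs : s ∈ G.act i) :
    G.IsAssign (Function.update a i s) := by
  intro j
  by_cases hj : j = i
  · subst hj; rw [Function.update_self]; exact hs
  · rw [Function.update_of_ne hj]; exact ha j

end CGame

/-- If a set `𝒢` of congestion games with incentives, each
with at most `n` users and positive minimum cost, satisfies the generalized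
smoothness condition with parameters `ζ > 0`, `λ > 0`, `μ < 1`, then in every
`G ∈ 𝒢` every potential minimizer `a^pm` is a pure Nash equilibrium with
`SC(a^pm) ≤ (λ/(1−μ))·MinCost(G)`; consequently the price of stochastic
anarchy is at most `λ/(1−μ)`. -/
theorem smoothness_PoSA_bound (n : ℕ) (𝒢 : Set CGame)
    (h𝒢 : ∀ G ∈ 𝒢, G.n ≤ n ∧ 0 < G.MinCost)
    (zeta lam mu : ℝ) (hzeta : 0 < zeta) (hlam : 0 < lam) (hmu : mu < 1)
    (hsmooth : ∀ G ∈ 𝒢, ∀ a a' : G.Assign, G.IsAssign a → G.IsAssign a' →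
      G.SC a + (∑ i, (G.userCost i (Function.update a i (a' i)) - G.userCost i a))
          + zeta * (G.potential a' - G.potential a)
        ≤ lam * G.SC a' + mu * G.SC a) :
    (∀ G ∈ 𝒢, ∀ apm : G.Assign, G.IsAssign apm →
      (∀ a : G.Assign, G.IsAssign a → G.potential apm ≤ G.potential a) →
      G.IsNE apm ∧ G.SC apm ≤ (lam / (1 - mu)) * G.MinCost) ∧
    (⨆ G : CGame, ⨆ _ : G ∈ 𝒢, ⨆ apm : G.Assign,
        ⨆ _ : G.IsAssign apm ∧ ∀ a : G.Assign, G.IsAssign a →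
          G.potential apm ≤ G.potential a,
        ENNReal.ofReal (G.SC apm / G.MinCost))
      ≤ ENNReal.ofReal (lam / (1 - mu)) := by
  have hmu' : (0:ℝ) < 1 - mu := by linarith
  have hc : (0:ℝ) < lam / (1 - mu) := div_pos hlam hmu'
  have main : ∀ G ∈ 𝒢, ∀ apm : G.Assign, G.IsAssign apm →
      (∀ a : G.Assign, G.IsAssign a → G.potential apm ≤ G.potential a) →
      G.IsNE apm ∧ G.SC apm ≤ (lam / (1 - mu)) * G.MinCost := by
    intro G hG apm hA hpm
    have hNE : G.IsNE apm := by
      refine ⟨hA, fun i s hs => ?_⟩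
      have hfe : G.IsAssign (Function.update apm i s) := G.isAssign_update hA hs
      have := hpm _ hfe
      have hd := G.potential_update_sub apm i s
      linarith [hpm _ hfe]
    refine ⟨hNE, ?_⟩
    -- SC apm ≤ c * SC a for every feasible a
    have hbound : ∀ a : G.Assign, G.IsAssign a →
        G.SC apm ≤ (lam / (1 - mu)) * G.SC a := by
      intro a ha
      have hsm := hsmooth G hG apm a hA ha
      have hpot := hpm a ha
      have hsumnn : (0:ℝ) ≤ ∑ i, (G.userCost i (Function.update apm i (a i))
          - G.userCost i apm) := by
        refine Finset.sum_nonneg fun i _ => ?_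
        have := hNE.2 i (a i) (ha i)
        linarith
      have h1 : G.SC apm * (1 - mu) ≤ lam * G.SC a := by nlinarith
      rw [div_mul_eq_mul_div, le_div_iff₀ hmu']
      linarith
    -- nonempty set of achievable costs
    have hNe : {c | ∃ a, G.IsAssign a ∧ G.SC a = c}.Nonempty := by
      refine ⟨G.SC (fun i => (G.act_ne i).choose), fun i => (G.act_ne i).choose, ?_, rfl⟩
      exact fun i => (G.act_ne i).choose_spec
    have hlow : ∀ x ∈ {c | ∃ a, G.IsAssign a ∧ G.SC a = c},
        G.SC apm / (lam / (1 - mu)) ≤ x := by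
      rintro x ⟨a, ha, rfl⟩
      rw [div_le_iff₀ hc]
      rw [mul_comm]
      exact hbound a ha
    have := le_csInf hNe hlow
    rw [div_le_iff₀ hc] at this
    rw [CGame.MinCost, mul_comm]
    exact this
  refine ⟨main, ?_⟩
  refine iSup_le fun G => iSup_le fun hG => iSup_le fun apm => iSup_le fun hpm => ?_
  have hM := (h𝒢 G hG).2
  have hb := (main G hG apm hpm.1 hpm.2).2
  refine ENNReal.ofReal_le_ofReal ?_
  rw [div_le_iff₀ hM]
  linarith [hb]
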